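/- Let x : ℤ × ℤ → ZMod 2 satisfy the 3-dot rule x_{i,j} + x_{i+1,j} + x_{i,j+1} = 0 for all (i,j) ∈ ℤ². Then for every n ≥ 0 and all (i,j) ∈ ℤ², the scale-2^n 3-dot rule holds: x_{i,j} + x_{i+2^n,j} + x_{i,j+2^n} = 0. -/
import Mathlib


/-- **(Scale-`2^n` 3-dot rule.)**
If `x : ℤ × ℤ → ZMod 2` satisfies the 3-dot rule
`x (i,j) + x (i+1,j) + x (i,j+1) = 0` for all `(i,j) ∈ ℤ²`, then for every `n ≥ 0` and
all `(i,j) ∈ ℤ²`, the scale-`2^n` 3-dot rule `x (i,j) + x (i+2^n,j) + x (i,j+2^n) = 0`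
holds. -/
theorem scale_pow_two_three_dot_rule
    (x : ℤ × ℤ → ZMod 2)
    (hx : ∀ i j : ℤ, x (i, j) + x (i + 1, j) + x (i, j + 1) = 0) :
    ∀ (n : ℕ) (i j : ℤ), x (i, j) + x (i + 2 ^ n, j) + x (i, j + 2 ^ n) = 0 := by
  intro n
  induction n with
  | zero => simpa using hx
  | succ n ih =>
    intro i j
    have key : ∀ a b : ℤ, x (a, b) = x (a + 2 ^ n, b) + x (a, b + 2 ^ n) := by
      intro a b
      have h := ih a b
      have : (1 : ZMod 2) + 1 = 0 := by decide
      linear_combination h - (x (a + 2 ^ n, b) + x (a, b + 2 ^ n)) * this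
    have e1 := key i j
    have e2 := key (i + 2 ^ n) j
    have e3 := key i (j + 2 ^ n)
    have hp : (2 : ℤ) ^ (n + 1) = 2 ^ n + 2 ^ n := by ring
    rw [hp]
    rw [show i + (2 ^ n + 2 ^ n) = i + 2 ^ n + 2 ^ n by ring,
        show j + (2 ^ n + 2 ^ n) = j + 2 ^ n + 2 ^ n by ring]
    have h2 : (2 : ZMod 2) = 0 := by decide
    linear_combination e1 + e2 + e3 + (x (i + 2 ^ n, j + 2 ^ n) + x (i + 2 ^ n + 2 ^ n, j) + x (i, j + 2 ^ n + 2 ^ n)) * h2
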